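/- Let G be a finite group such that every 3-maximal subgroup of G is an ICΦ-subgroup of G. Then G is solvable. -/

import Mathlib

/-- `H` is an `ICΦ`-subgroup of `G` if `H ∩ [H,G] ≤ Φ(H)`. -/
def IsICPhi {G : Type*} [Group G] (H : Subgroup G) : Prop :=
  H ⊓ ⁅H, (⊤ : Subgroup G)⁆ ≤ (frattini ↥H).map H.subtype

/-- `H` is a `3`-maximal subgroup of `G` if there is a chain `H < M₁ < M₂ < G`
with each term maximal in the next. -/
def IsThreeMaximal {G : Type*} [Group G] (H : Subgroup G) : Prop :=
  ∃ M₁ M₂ : Subgroup G, IsCoatom M₂ ∧ M₁ ≤ M₂ ∧ IsCoatom (M₁.subgroupOf M₂) ∧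
    H ≤ M₁ ∧ IsCoatom (H.subgroupOf M₁)

namespace ICPhiAux

open Subgroup
open scoped commutatorElement

variable {G : Type*} [Group G]

/-- `[H, G]` is always a normal subgroup of `G`. -/
lemma commutator_top_normal (H : Subgroup G) : (⁅H, (⊤ : Subgroup G)⁆).Normal := by
  constructor
  intro n hn g
  have key : ⁅H, (⊤ : Subgroup G)⁆ ≤
      Subgroup.comap ((MulAut.conj g).toMonoidHom) ⁅H, (⊤ : Subgroup G)⁆ := by
    rw [Subgroup.commutator_le]
    intro h hh k _
    rw [Subgroup.mem_comap]
    have hconj : (MulAut.conj g).toMonoidHom ⁅h, k⁆ = ⁅h, g⁆⁻¹ * ⁅h, g * k⁆ := by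
      simp only [MulEquiv.coe_toMonoidHom, MulAut.conj_apply, commutatorElement_def]
      group
    rw [hconj]
    exact mul_mem (inv_mem (Subgroup.commutator_mem_commutator hh (Subgroup.mem_top g)))
      (Subgroup.commutator_mem_commutator hh (Subgroup.mem_top _))
  have := key hn
  rw [Subgroup.mem_comap] at this
  simpa using this

lemma map_inf_of_ker_le {Y : Type*} [Group Y] (f : G →* Y) {A B : Subgroup G}
    (hA : f.ker ≤ A) : (A ⊓ B).map f = A.map f ⊓ B.map f := by
  refine le_antisymm (le_inf (Subgroup.map_mono inf_le_left) (Subgroup.map_mono inf_le_right)) ?_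
  intro y hy
  have hy' : y ∈ A.map f ∧ y ∈ B.map f := ⟨hy.1, hy.2⟩
  obtain ⟨⟨a, ha, rfl⟩, b, hb, hba⟩ := hy'
  refine ⟨b, Subgroup.mem_inf.mpr ⟨?_, hb⟩, hba⟩
  have hker : b * a⁻¹ ∈ f.ker := by
    rw [MonoidHom.mem_ker, map_mul, map_inv, hba, mul_inv_cancel]
  have := A.mul_mem (hA hker) ha
  simpa using this

lemma subgroupOf_map_subtype_self {M : Subgroup G} (L : Subgroup ↥M) :
    (L.map M.subtype).subgroupOf M = L := by
  rw [← Subgroup.comap_subtype]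
  exact Subgroup.comap_map_eq_self (by rw [Subgroup.ker_subtype]; exact bot_le)

lemma isCoatom_subgroupOf_iff {H M : Subgroup G} (hHM : H ≤ M) :
    IsCoatom (H.subgroupOf M) ↔
      H < M ∧ ∀ K : Subgroup G, H ≤ K → K ≤ M → K = H ∨ K = M := by
  constructor
  · rintro ⟨hne, hmax⟩
    have hHM' : H ≠ M := fun e => hne (by rw [e, subgroupOf_self])
    refine ⟨lt_of_le_of_ne hHM hHM', fun K hHK hKM => ?_⟩
    rcases eq_or_ne (K.subgroupOf M) (H.subgroupOf M) with he | hne'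
    · left
      have := congrArg (Subgroup.map M.subtype) he
      rwa [subgroupOf_map_subtype, subgroupOf_map_subtype, inf_eq_left.mpr hKM,
        inf_eq_left.mpr hHM] at this
    · right
      have hle : H.subgroupOf M ≤ K.subgroupOf M := by
        rw [← Subgroup.comap_subtype, ← Subgroup.comap_subtype]
        exact Subgroup.comap_mono hHK
      have htop := hmax _ (lt_of_le_of_ne hle hne'.symm)
      have := Subgroup.subgroupOf_eq_top.mp htop
      exact le_antisymm hKM this
  · rintro ⟨h1, h2⟩
    constructor
    · intro htop
      exact h1.ne (le_antisymm h1.le (Subgroup.subgroupOf_eq_top.mp htop))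
    · intro L hlt
      set K := L.map M.subtype with hK
      have hHK : H ≤ K := by
        calc H = (H.subgroupOf M).map M.subtype := by
                rw [subgroupOf_map_subtype, inf_eq_left.mpr hHM]
          _ ≤ K := Subgroup.map_mono hlt.le
      have hKM : K ≤ M := Subgroup.map_subtype_le L
      rcases h2 K hHK hKM with he | he
      · exfalso
        have : L = H.subgroupOf M := by
          rw [← subgroupOf_map_subtype_self L, ← hK, he]
        exact hlt.ne' this
      · rw [← subgroupOf_map_subtype_self L, ← hK, he, subgroupOf_self]

variable [Finite G]

lemma exists_max_between {K M : Subgroup G} (h : K < M) :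
    ∃ H : Subgroup G, K ≤ H ∧ H ≤ M ∧ IsCoatom (H.subgroupOf M) := by
  rcases eq_top_or_exists_le_coatom (K.subgroupOf M) with ht | ⟨L, hL, hKL⟩
  · exact absurd (Subgroup.subgroupOf_eq_top.mp ht) h.not_ge
  · refine ⟨L.map M.subtype, ?_, Subgroup.map_subtype_le L, ?_⟩
    · calc K = K ⊓ M := (inf_eq_left.mpr h.le).symm
        _ = (K.subgroupOf M).map M.subtype := (Subgroup.subgroupOf_map_subtype K M).symm
        _ ≤ L.map M.subtype := Subgroup.map_mono hKL
    · rwa [subgroupOf_map_subtype_self]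

lemma exists_threeMax {A B C : Subgroup G} (hC : IsCoatom C) (hA : A ≠ ⊥)
    (hAB : A < B) (hBC : B < C) :
    ∃ H : Subgroup G, IsThreeMaximal H ∧ A ≤ H ∧ H ≤ C ∧ H ≠ ⊥ := by
  obtain ⟨M₁, hBM₁, hM₁C, hco₁⟩ := exists_max_between hBC
  have hAM₁ : A < M₁ := lt_of_lt_of_le hAB hBM₁
  obtain ⟨H, hAH, hHM₁, hco₂⟩ := exists_max_between hAM₁
  exact ⟨H, ⟨M₁, C, hC, hM₁C, hco₁, hHM₁, hco₂⟩, hAH, hHM₁.trans hM₁C,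
    fun hbot => hA (le_bot_iff.mp (hbot ▸ hAH))⟩

lemma exists_threeMax' {A B C : Subgroup G} (hC : C ≠ ⊤) (hA : A ≠ ⊥)
    (hAB : A < B) (hBC : B < C) :
    ∃ H : Subgroup G, IsThreeMaximal H ∧ A ≤ H ∧ H ≠ ⊥ := by
  rcases eq_top_or_exists_le_coatom C with ht | ⟨C', hC', hCC'⟩
  · exact absurd ht hC
  · obtain ⟨H, h3, hAH, _, hne⟩ := exists_threeMax hC' hA hAB (lt_of_lt_of_le hBC hCC')
    exact ⟨H, h3, hAH, hne⟩

/-- If an `ICΦ`-subgroup is contained in `[H, G]`, it is trivial. -/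
lemma eq_bot_of_icphi {H : Subgroup G} (hic : IsICPhi H)
    (hle : H ≤ ⁅H, (⊤ : Subgroup G)⁆) : H = ⊥ := by
  by_contra hne
  have h1 : H ≤ (frattini ↥H).map H.subtype := le_trans (le_inf le_rfl hle) hic
  have h2 : (⊤ : Subgroup ↥H) ≤ frattini ↥H := by
    intro x _
    obtain ⟨y, hy, hxy⟩ := h1 x.2
    have : y = x := Subtype.ext hxy
    rwa [← this]
  haveI : Nontrivial ↥H := (Subgroup.nontrivial_iff_ne_bot H).mpr hne
  haveI : Nontrivial (Subgroup ↥H) := by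
    obtain ⟨x, hx⟩ := exists_ne (1 : ↥H)
    refine nontrivial_of_ne ⊥ ⊤ fun e => hx ?_
    have : x ∈ (⊥ : Subgroup ↥H) := e ▸ Subgroup.mem_top x
    exact Subgroup.mem_bot.mp this
  obtain ⟨M, hM⟩ := IsCoatomic.exists_coatom (α := Subgroup ↥H)
  exact hM.1 (top_le_iff.mp (h2.trans (frattini_le_coatom hM)))

lemma solvable_of_subgroups_trivial (X : Type*) [Group X]
    (h : ∀ L : Subgroup X, L = ⊥ ∨ L = ⊤) : Group.IsSolvable X := by
  rcases subsingleton_or_nontrivial X with hs | hnt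
  · infer_instance
  · obtain ⟨x, hx⟩ := exists_ne (1 : X)
    rcases h (Subgroup.zpowers x) with h' | h'
    · exact absurd (Subgroup.zpowers_eq_bot.mp h') hx
    · haveI : IsCyclic X := ⟨⟨x, fun y => by
        have hy : y ∈ (⊤ : Subgroup X) := Subgroup.mem_top y
        rw [← h'] at hy
        exact hy⟩⟩
      letI := IsCyclic.commGroup (α := X)
      exact isSolvable_of_comm fun a b => mul_comm a b

lemma solvable_bot : Group.IsSolvable ↥(⊥ : Subgroup G) := by
  refine isSolvable_of_comm fun a b => ?_
  have ha : (a : G) = 1 := Subgroup.mem_bot.mp a.2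
  have hb : (b : G) = 1 := Subgroup.mem_bot.mp b.2
  ext
  simp [ha, hb]

lemma norm_le_cent {p : ℕ} (hp : p.Prime)
    (hmin : ∀ q : ℕ, q.Prime → q ∣ Nat.card G → p ≤ q)
    {y : G} (hy : orderOf y = p) :
    Subgroup.normalizer (Subgroup.zpowers y : Set G) ≤ Subgroup.centralizer (Subgroup.zpowers y : Set G) := by
  haveI : Fact p.Prime := ⟨hp⟩
  intro g hg
  have h1 : g * y * g⁻¹ ∈ Subgroup.zpowers y := by
    rw [Subgroup.mem_normalizer_iff] at hg
    exact (hg y).mp (Subgroup.mem_zpowers y)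
  obtain ⟨k, hk0⟩ := h1
  have hk : y ^ k = g * y * g⁻¹ := hk0
  clear hk0
  have iter : ∀ m : ℕ, g ^ m * y * (g ^ m)⁻¹ = y ^ (k ^ m) := by
    intro m
    induction m with
    | zero => simp
    | succ n ih =>
      have e1 : g ^ (n + 1) * y * (g ^ (n + 1))⁻¹ = g * (g ^ n * y * (g ^ n)⁻¹) * g⁻¹ := by
        group
      rw [e1, ih, ← conj_zpow, ← hk, ← zpow_mul]
      congr 1
      rw [pow_succ k n, mul_comm]
  have hgo := pow_orderOf_eq_one g
  have hiter := iter (orderOf g)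
  rw [hgo] at hiter
  simp only [one_mul, inv_one, mul_one] at hiter
  -- y = y ^ (k ^ orderOf g)
  have hdvd1 : (p : ℤ) ∣ k ^ orderOf g - 1 := by
    rw [← hy, orderOf_dvd_iff_zpow_eq_one, zpow_sub, ← hiter, zpow_one]
    exact mul_inv_cancel y
  -- pass to ZMod p
  have hK : ((k : ZMod p)) ^ orderOf g = 1 := by
    have : (((k ^ orderOf g - 1 : ℤ)) : ZMod p) = 0 := by
      rwa [ZMod.intCast_zmod_eq_zero_iff_dvd]
    push_cast at this
    linear_combination this
  have hK0 : (k : ZMod p) ≠ 0 := by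
    intro h0
    have hpk : (p : ℤ) ∣ k := by rwa [← ZMod.intCast_zmod_eq_zero_iff_dvd]
    have : y ^ k = 1 := by
      rw [← hy] at hpk
      exact (orderOf_dvd_iff_zpow_eq_one).mp hpk
    rw [this] at hk
    have hy1 : y = 1 := by
      have e := hk.symm
      -- g * y * g⁻¹ = 1
      have e2 := congrArg (fun t => g⁻¹ * t * g) e
      simpa [mul_assoc] using e2
    rw [hy1, orderOf_one] at hy
    exact hp.one_lt.ne' hy.symm
  set u : (ZMod p)ˣ := Units.mk0 (k : ZMod p) hK0 with hu
  have hupow : u ^ orderOf g = 1 := by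
    refine Units.ext ?_
    rw [Units.val_pow_eq_pow_val, Units.val_one]
    simpa [hu] using hK
  have he1 : orderOf u = 1 := by
    by_contra hne
    set q := (orderOf u).minFac with hq
    have hq_prime : q.Prime := Nat.minFac_prime hne
    have hq_dvd_ord : q ∣ orderOf g := dvd_trans (Nat.minFac_dvd _)
      (orderOf_dvd_of_pow_eq_one hupow)
    have hq_dvd_card : q ∣ Nat.card G := hq_dvd_ord.trans (orderOf_dvd_natCard g)
    have hple : p ≤ q := hmin q hq_prime hq_dvd_card
    have hp2 : 2 ≤ p := hp.two_le
    have hq_dvd_p1 : q ∣ p - 1 := by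
      have h1 : orderOf u ∣ Fintype.card (ZMod p)ˣ := orderOf_dvd_card
      rw [ZMod.card_units_eq_totient, Nat.totient_prime hp] at h1
      exact (Nat.minFac_dvd _).trans h1
    have : q ≤ p - 1 := Nat.le_of_dvd (by omega) hq_dvd_p1
    omega
  have hu1 : u = 1 := orderOf_eq_one_iff.mp he1
  have hk1 : ((k - 1 : ℤ) : ZMod p) = 0 := by
    have : (k : ZMod p) = 1 := by
      have := congrArg Units.val hu1
      simpa [hu] using this
    push_cast
    rw [this]
    ring
  have hdvd2 : (p : ℤ) ∣ k - 1 := by rwa [← ZMod.intCast_zmod_eq_zero_iff_dvd]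
  have hyk : y ^ k = y := by
    have e : y ^ (k - 1) = 1 := by
      rw [← hy] at hdvd2
      exact (orderOf_dvd_iff_zpow_eq_one).mp hdvd2
    have e2 : y ^ k = y ^ (k - 1) * y := by
      rw [← zpow_add_one]
      congr 1
      ring
    rw [e2, e, one_mul]
  have hcomm : g * y = y * g := by
    have e : g * y * g⁻¹ = y := by rw [← hk, hyk]
    exact mul_inv_eq_iff_eq_mul.mp e
  rw [Subgroup.mem_centralizer_iff]
  rintro z ⟨n, rfl⟩
  have hc : Commute g y := hcomm
  exact (hc.zpow_right n).eq.symm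

lemma pgroup_small {p : ℕ} [Fact p.Prime] {P : Subgroup G}
    (hPG : IsPGroup p ↥P) (hbot : P ≠ ⊥)
    (hsub : ∀ A : Subgroup G, A < P → A = ⊥) :
    ∃ y : G, orderOf y = p ∧ Subgroup.zpowers y = P := by
  haveI : Nontrivial ↥P := (Subgroup.nontrivial_iff_ne_bot P).mpr hbot
  obtain ⟨x, hx⟩ := exists_ne (1 : ↥P)
  obtain ⟨kx, hkx⟩ := (IsPGroup.iff_orderOf.mp hPG) x
  have hkx0 : kx ≠ 0 := by
    intro h0
    rw [h0, pow_zero, orderOf_eq_one_iff] at hkx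
    exact hx hkx
  have hdvd : p ∣ Nat.card ↥P := by
    have h1 : orderOf x ∣ Nat.card ↥P := orderOf_dvd_natCard x
    exact dvd_trans (by rw [hkx]; exact dvd_pow_self p hkx0) h1
  obtain ⟨y₀, hy₀⟩ := exists_prime_orderOf_dvd_card' (G := ↥P) p hdvd
  refine ⟨(y₀ : G), ?_, ?_⟩
  · rw [← hy₀]
    exact orderOf_injective P.subtype P.subtype_injective y₀
  · have hle : Subgroup.zpowers (y₀ : G) ≤ P := Subgroup.zpowers_le.mpr y₀.2
    rcases eq_or_lt_of_le hle with he | hlt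
    · exact he
    · exfalso
      have := hsub _ hlt
      have hy1 : (y₀ : G) = 1 := Subgroup.zpowers_eq_bot.mp this
      have : y₀ = 1 := Subtype.ext hy1
      rw [this, orderOf_one] at hy₀
      exact (Fact.out : p.Prime).one_lt.ne' hy₀.symm

lemma burnside_step {p : ℕ} [Fact p.Prime] (P : Sylow p G)
    (hcent : Subgroup.normalizer ((P : Subgroup G) : Set G) ≤
      Subgroup.centralizer ((P : Subgroup G) : Set G))
    (hcomm : ∀ a b : ↥(P : Subgroup G), a * b = b * a)
    (hker : Group.IsSolvable ↥(MonoidHom.transferSylow P hcent).ker) : Group.IsSolvable G := by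
  haveI : Group.IsSolvable ↥(P : Subgroup G) := isSolvable_of_comm hcomm
  set f := MonoidHom.transferSylow P hcent with hf
  haveI : Group.IsSolvable (G ⧸ f.ker) := by
    have e := QuotientGroup.quotientKerEquivRange f
    exact solvable_of_solvable_injective (f := e.toMonoidHom) e.injective
  exact solvable_of_ker_le_range f.ker.subtype (QuotientGroup.mk' f.ker)
    (by rw [QuotientGroup.ker_mk', Subgroup.range_subtype])

lemma small_solvable (X : Type*) [Group X] [Finite X]
    (hsmall : ∀ A B : Subgroup X, A < B → B < ⊤ → A = ⊥) : Group.IsSolvable X := by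
  rcases subsingleton_or_nontrivial X with hs | hnt
  · infer_instance
  have hcard1 : (1 : ℕ) < Nat.card X := Finite.one_lt_card
  set p := (Nat.card X).minFac with hpdef
  have hp : p.Prime := Nat.minFac_prime (by omega)
  haveI : Fact p.Prime := ⟨hp⟩
  obtain ⟨P⟩ : Nonempty (Sylow p X) := inferInstance
  have hpdvd : p ∣ Nat.card X := Nat.minFac_dvd _
  by_cases htop : (P : Subgroup X) = ⊤
  · have hpg : IsPGroup p X := by
      have h2 := P.2
      rw [htop] at h2
      have e : ↥(⊤ : Subgroup X) ≃* X := Subgroup.topEquiv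
      exact h2.of_surjective e.toMonoidHom e.surjective
    haveI := hpg.isNilpotent
    infer_instance
  · have hPlt : (P : Subgroup X) < ⊤ := lt_top_iff_ne_top.mpr htop
    have hPbot : (P : Subgroup X) ≠ ⊥ := by
      intro hb
      have hc := P.card_eq_multiplicity
      rw [hb, Subgroup.card_bot] at hc
      have hpos := hp.factorization_pos_of_dvd (by omega) hpdvd
      have : p ^ (Nat.card X).factorization p ≠ 1 :=
        Nat.one_lt_pow hpos.ne' hp.one_lt |>.ne'
      exact this hc.symm
    have hsub : ∀ A : Subgroup X, A < (P : Subgroup X) → A = ⊥ :=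
      fun A hA => hsmall A _ hA hPlt
    obtain ⟨y, hy, hzy⟩ := pgroup_small P.2 hPbot hsub
    have hmin : ∀ q : ℕ, q.Prime → q ∣ Nat.card X → p ≤ q :=
      fun q hq hdq => Nat.minFac_le_of_dvd hq.two_le hdq
    have hcent : Subgroup.normalizer ((P : Subgroup X) : Set X) ≤
        Subgroup.centralizer ((P : Subgroup X) : Set X) := by
      rw [← hzy]
      exact norm_le_cent hp hmin hy
    have hcomm : ∀ a b : ↥(P : Subgroup X), a * b = b * a := by
      intro a b
      have ha : (a : X) ∈ Subgroup.zpowers y := by rw [hzy]; exact a.2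
      have hb : (b : X) ∈ Subgroup.zpowers y := by rw [hzy]; exact b.2
      obtain ⟨i, hi⟩ := ha
      obtain ⟨j, hj⟩ := hb
      have : (a : X) * b = (b : X) * a := by
        rw [← hi, ← hj, ← zpow_add, ← zpow_add, add_comm]
      exact Subtype.ext this
    refine burnside_step P hcent hcomm ?_
    set K := (MonoidHom.transferSylow P hcent).ker with hK
    have hKtop : K ≠ ⊤ := by
      intro he
      have hnd := MonoidHom.not_dvd_card_ker_transferSylow P hcent
      rw [← hK, he, Subgroup.card_top] at hnd
      exact hnd hpdvd
    have hKlt : K < ⊤ := lt_top_iff_ne_top.mpr hKtop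
    refine solvable_of_subgroups_trivial ↥K ?_
    intro L
    have hmle : L.map K.subtype ≤ K := Subgroup.map_subtype_le L
    rcases eq_or_lt_of_le hmle with he | hlt
    · right
      have htopmap : (⊤ : Subgroup ↥K).map K.subtype = K := by
        rw [← MonoidHom.range_eq_map, Subgroup.range_subtype]
      exact Subgroup.map_injective K.subtype_injective (by rw [he, htopmap])
    · left
      have := hsmall _ _ hlt hKlt
      have : L.map K.subtype = (⊥ : Subgroup ↥K).map K.subtype := by
        rw [this, Subgroup.map_bot]
      exact Subgroup.map_injective K.subtype_injective this

lemma solvable_of_le_frattini {H N : Subgroup G}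
    (hle : N ≤ (frattini ↥H).map H.subtype) : Group.IsSolvable ↥N := by
  haveI : Group.IsNilpotent ↥(frattini ↥H) := frattini_nilpotent
  haveI h1 : Group.IsSolvable ↥(frattini ↥H) := inferInstance
  haveI h2 : Group.IsSolvable ↥((frattini ↥H).map H.subtype) := by
    have e := (frattini ↥H).equivMapOfInjective H.subtype H.subtype_injective
    exact solvable_of_surjective (f := e.toMonoidHom) e.surjective
  exact solvable_of_solvable_injective (Subgroup.inclusion_injective hle)

lemma frattini_map_le {X Y : Type*} [Group X] [Group Y] (f : X →* Y)
    (hf : Function.Surjective f) : (frattini X).map f ≤ frattini Y :=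
  Subgroup.map_le_iff_le_comap.mpr (frattini_le_comap_frattini_of_surjective hf)

lemma isCoatom_subgroupOf_comap {Q : Type*} [Group Q] (π : G →* Q)
    (hs : Function.Surjective π) {H M : Subgroup Q} (hHM : H ≤ M)
    (hco : IsCoatom (H.subgroupOf M)) :
    IsCoatom ((H.comap π).subgroupOf (M.comap π)) := by
  rw [isCoatom_subgroupOf_iff hHM] at hco
  rw [isCoatom_subgroupOf_iff (Subgroup.comap_mono hHM)]
  obtain ⟨hlt, hbetween⟩ := hco
  constructor
  · exact lt_of_le_of_ne (Subgroup.comap_mono hHM)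
      (fun e => hlt.ne (Subgroup.comap_injective hs e))
  · intro K hK1 hK2
    have hker : π.ker ≤ K := (Subgroup.ker_le_comap (f := π) H).trans hK1
    have hmem := hbetween (K.map π) ?_ ?_
    · rcases hmem with e | e
      · left; rw [← Subgroup.comap_map_eq_self hker, e]
      · right; rw [← Subgroup.comap_map_eq_self hker, e]
    · calc H = (H.comap π).map π := (Subgroup.map_comap_eq_self_of_surjective hs H).symm
        _ ≤ K.map π := Subgroup.map_mono hK1
    · calc K.map π ≤ (M.comap π).map π := Subgroup.map_mono hK2
        _ = M := Subgroup.map_comap_eq_self_of_surjective hs M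

lemma threeMax_comap {Q : Type*} [Group Q] (π : G →* Q) (hs : Function.Surjective π)
    {K : Subgroup Q} (hK : IsThreeMaximal K) : IsThreeMaximal (K.comap π) := by
  obtain ⟨M₁, M₂, hco2, hle12, hco1, hleK, hco0⟩ := hK
  exact ⟨M₁.comap π, M₂.comap π, Subgroup.isCoatom_comap_of_surjective hs hco2,
    Subgroup.comap_mono hle12, isCoatom_subgroupOf_comap π hs hle12 hco1,
    Subgroup.comap_mono hleK, isCoatom_subgroupOf_comap π hs hleK hco0⟩

lemma isICPhi_map {Q : Type*} [Group Q] (π : G →* Q) (hs : Function.Surjective π)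
    {H : Subgroup G} (hker : π.ker ≤ H) (hic : IsICPhi H) : IsICPhi (H.map π) := by
  unfold IsICPhi at hic ⊢
  have htop : Subgroup.map π (⊤ : Subgroup G) = ⊤ := Subgroup.map_top_of_surjective π hs
  have hcompeq : (H.map π).subtype.comp (π.subgroupMap H) = π.comp H.subtype :=
    MonoidHom.ext fun x => rfl
  calc H.map π ⊓ ⁅H.map π, (⊤ : Subgroup Q)⁆
      = H.map π ⊓ (⁅H, (⊤ : Subgroup G)⁆).map π := by
        rw [Subgroup.map_commutator, htop]
    _ = (H ⊓ ⁅H, (⊤ : Subgroup G)⁆).map π := (map_inf_of_ker_le π hker).symm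
    _ ≤ ((frattini ↥H).map H.subtype).map π := Subgroup.map_mono hic
    _ = (frattini ↥H).map (π.comp H.subtype) := Subgroup.map_map _ _ _
    _ = ((frattini ↥H).map (π.subgroupMap H)).map (H.map π).subtype := by
        rw [Subgroup.map_map, hcompeq]
    _ ≤ (frattini ↥(H.map π)).map (H.map π).subtype :=
        Subgroup.map_mono (frattini_map_le _ (π.subgroupMap_surjective H))

lemma simple_burnside_end {p : ℕ} [Fact p.Prime] (P : Sylow p G)
    (hsimple : ∀ K : Subgroup G, K.Normal → K = ⊥ ∨ K = ⊤)
    (hpdvd : p ∣ Nat.card G)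
    (hcent : Subgroup.normalizer ((P : Subgroup G) : Set G) ≤
      Subgroup.centralizer ((P : Subgroup G) : Set G))
    (hcomm : ∀ a b : ↥(P : Subgroup G), a * b = b * a) : Group.IsSolvable G := by
  refine burnside_step P hcent hcomm ?_
  rcases hsimple (MonoidHom.transferSylow P hcent).ker inferInstance with hk | hk
  · rw [hk]; exact solvable_bot
  · exfalso
    have hnd := MonoidHom.not_dvd_card_ker_transferSylow P hcent
    rw [hk, Subgroup.card_top] at hnd
    exact hnd hpdvd

lemma zpowers_comm {P : Subgroup G} {y : G} (hzy : Subgroup.zpowers y = P) :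
    ∀ a b : ↥P, a * b = b * a := by
  intro a b
  have ha : (a : G) ∈ Subgroup.zpowers y := by rw [hzy]; exact a.2
  have hb : (b : G) ∈ Subgroup.zpowers y := by rw [hzy]; exact b.2
  obtain ⟨i, hi⟩ := ha
  obtain ⟨j, hj⟩ := hb
  refine Subtype.ext ?_
  show (a : G) * b = (b : G) * a
  rw [← hi, ← hj, ← zpow_add, ← zpow_add, add_comm]

lemma simple_case (h : ∀ H : Subgroup G, IsThreeMaximal H → IsICPhi H)
    (hsimple : ∀ K : Subgroup G, K.Normal → K = ⊥ ∨ K = ⊤) : Group.IsSolvable G := by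
  rcases subsingleton_or_nontrivial G with hs | hnt
  · infer_instance
  by_cases hab : ∀ a b : G, a * b = b * a
  · exact isSolvable_of_comm hab
  have hZ : Subgroup.center G = ⊥ := by
    rcases hsimple (Subgroup.center G) inferInstance with h' | h'
    · exact h'
    · exfalso
      refine hab fun a b => ?_
      have ha : a ∈ Subgroup.center G := h' ▸ Subgroup.mem_top a
      exact (Subgroup.mem_center_iff.mp ha b).symm
  have all_bot : ∀ H : Subgroup G, IsThreeMaximal H → H = ⊥ := by
    intro H h3
    rcases hsimple _ (commutator_top_normal H) with hc | hc
    · have hle : H ≤ Subgroup.center G := by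
        intro x hx
        rw [Subgroup.mem_center_iff]
        intro g
        have hmem : ⁅x, g⁆ ∈ (⊥ : Subgroup G) :=
          hc ▸ Subgroup.commutator_mem_commutator hx (Subgroup.mem_top g)
        have h1 : ⁅x, g⁆ = 1 := Subgroup.mem_bot.mp hmem
        exact (commutatorElement_eq_one_iff_mul_comm.mp h1).symm
      rw [hZ] at hle
      exact le_bot_iff.mp hle
    · exact eq_bot_of_icphi (h H h3) (by rw [hc]; exact le_top)
  have no4 : ∀ A B C : Subgroup G, A ≠ ⊥ → A < B → B < C → C ≠ ⊤ → False := by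
    intro A B C hA hAB hBC hC
    obtain ⟨H, h3, hAH, hne⟩ := exists_threeMax' hC hA hAB hBC
    exact hne (all_bot H h3)
  have hcard1 : (1 : ℕ) < Nat.card G := Finite.one_lt_card
  set p := (Nat.card G).minFac with hpdef
  have hp : p.Prime := Nat.minFac_prime (by omega)
  haveI : Fact p.Prime := ⟨hp⟩
  obtain ⟨P⟩ : Nonempty (Sylow p G) := inferInstance
  have hpdvd : p ∣ Nat.card G := Nat.minFac_dvd _
  have hmin : ∀ q : ℕ, q.Prime → q ∣ Nat.card G → p ≤ q :=
    fun q hq hdq => Nat.minFac_le_of_dvd hq.two_le hdq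
  by_cases htop : (P : Subgroup G) = ⊤
  · have hpg : IsPGroup p G := by
      have h2 := P.2
      rw [htop] at h2
      have e : ↥(⊤ : Subgroup G) ≃* G := Subgroup.topEquiv
      exact h2.of_surjective e.toMonoidHom e.surjective
    haveI := hpg.isNilpotent
    infer_instance
  · have hPlt : (P : Subgroup G) < ⊤ := lt_top_iff_ne_top.mpr htop
    have hPbot : (P : Subgroup G) ≠ ⊥ := by
      intro hb
      have hc := P.card_eq_multiplicity
      rw [hb, Subgroup.card_bot] at hc
      have hpos := hp.factorization_pos_of_dvd (by omega) hpdvd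
      exact (Nat.one_lt_pow hpos.ne' hp.one_lt).ne' hc.symm
    rcases eq_or_lt_of_le (Subgroup.le_normalizer (H := (P : Subgroup G))) with hNP | hNP
    · -- self-normalizing Sylow
      have hcardP := P.card_eq_multiplicity
      set n := (Nat.card G).factorization p with hn
      have hn1 : 0 < n := hp.factorization_pos_of_dvd (by omega) hpdvd
      have hn2 : n ≤ 2 := by
        by_contra hgt
        push_neg at hgt
        obtain ⟨B', hB'⟩ := Sylow.exists_subgroup_card_pow_prime (G := ↥(P : Subgroup G)) p
          (n := 2) (by rw [hcardP]; exact pow_dvd_pow p (by omega))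
        set B := B'.map (P : Subgroup G).subtype with hB
        have hcardB : Nat.card ↥B = p ^ 2 := by
          have e := B'.equivMapOfInjective (P : Subgroup G).subtype
            (P : Subgroup G).subtype_injective
          rw [hB, ← Nat.card_congr e.toEquiv, hB']
        obtain ⟨a, ha⟩ := exists_prime_orderOf_dvd_card' (G := ↥B) p
          (by rw [hcardB]; exact dvd_pow_self p two_ne_zero)
        have hcardA : Nat.card ↥(Subgroup.zpowers (a : G)) = p := by
          have hoi : orderOf (a : G) = orderOf a :=
            orderOf_injective B.subtype B.subtype_injective a
          rw [Nat.card_zpowers, hoi, ha]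
        have ha1 : (a : G) ≠ 1 := by
          intro e
          rw [show a = 1 from Subtype.ext e, orderOf_one] at ha
          exact hp.one_lt.ne' ha.symm
        refine no4 (Subgroup.zpowers (a : G)) B (P : Subgroup G) ?_ ?_ ?_ htop
        · exact fun e => ha1 (Subgroup.zpowers_eq_bot.mp e)
        · refine lt_of_le_of_ne (Subgroup.zpowers_le.mpr a.2) fun e => ?_
          have h12 : (p : ℕ) ^ 1 = p ^ 2 := by
            rw [pow_one]
            calc p = Nat.card ↥(Subgroup.zpowers (a : G)) := hcardA.symm
              _ = Nat.card ↥B := by rw [e]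
              _ = p ^ 2 := hcardB
          exact (by omega : (1:ℕ) ≠ 2) (Nat.pow_right_injective hp.two_le h12)
        · refine lt_of_le_of_ne (by rw [hB]; exact Subgroup.map_subtype_le B') fun e => ?_
          have h2n : (p : ℕ) ^ 2 = p ^ n := by
            calc (p:ℕ) ^ 2 = Nat.card ↥B := hcardB.symm
              _ = Nat.card ↥(P : Subgroup G) := by rw [e]
              _ = p ^ n := hcardP
          have := Nat.pow_right_injective hp.two_le h2n
          omega
      have hcomm : ∀ a b : ↥(P : Subgroup G), a * b = b * a := by
        have hn12 : n = 1 ∨ n = 2 := by omega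
        rcases hn12 with h1 | h2
        · haveI := isCyclic_of_prime_card (α := ↥(P : Subgroup G)) (p := p)
            (by rw [hcardP, h1, pow_one])
          letI := IsCyclic.commGroup (α := ↥(P : Subgroup G))
          exact fun a b => mul_comm a b
        · exact IsPGroup.commutative_of_card_eq_prime_sq (by rw [hcardP, h2])
      have hcent : Subgroup.normalizer ((P : Subgroup G) : Set G) ≤
          Subgroup.centralizer ((P : Subgroup G) : Set G) := by
        rw [← hNP]
        intro g hg
        rw [Subgroup.mem_centralizer_iff]
        intro z hz
        exact congrArg Subtype.val (hcomm ⟨z, hz⟩ ⟨g, hg⟩)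
      exact simple_burnside_end P hsimple hpdvd hcent hcomm
    · -- P < N(P)
      have hNtop : Subgroup.normalizer ((P : Subgroup G) : Set G) ≠ ⊤ := by
        intro e
        have hnorm : (P : Subgroup G).Normal := Subgroup.normalizer_eq_top_iff.mp e
        rcases hsimple _ hnorm with e1 | e1
        exacts [hPbot e1, htop e1]
      have hsub : ∀ A : Subgroup G, A < (P : Subgroup G) → A = ⊥ := by
        intro A hA
        by_contra hAne
        exact no4 A (P : Subgroup G) (Subgroup.normalizer ((P : Subgroup G) : Set G)) hAne hA hNP hNtop
      obtain ⟨y, hy, hzy⟩ := pgroup_small P.2 hPbot hsub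
      have hcent : Subgroup.normalizer ((P : Subgroup G) : Set G) ≤
          Subgroup.centralizer ((P : Subgroup G) : Set G) := by
        rw [← hzy]
        exact norm_le_cent hp hmin hy
      exact simple_burnside_end P hsimple hpdvd hcent (zpowers_comm hzy)

lemma hyp_quotient (h : ∀ H : Subgroup G, IsThreeMaximal H → IsICPhi H)
    (N : Subgroup G) [N.Normal] :
    ∀ K : Subgroup (G ⧸ N), IsThreeMaximal K → IsICPhi K := by
  intro K hK
  have hs : Function.Surjective (QuotientGroup.mk' N) := QuotientGroup.mk'_surjective N
  have h1 := threeMax_comap (QuotientGroup.mk' N) hs hK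
  have h2 := h _ h1
  have hker : (QuotientGroup.mk' N).ker ≤ K.comap (QuotientGroup.mk' N) :=
    Subgroup.ker_le_comap (f := QuotientGroup.mk' N) K
  have h3 := isICPhi_map (QuotientGroup.mk' N) hs hker h2
  rwa [Subgroup.map_comap_eq_self_of_surjective hs K] at h3

end ICPhiAux

namespace ICPhiAux

open scoped commutatorElement

universe u

theorem main_aux : ∀ (n : ℕ) (G : Type u) [Group G] [Finite G], Nat.card G ≤ n →
    (∀ H : Subgroup G, IsThreeMaximal H → IsICPhi H) → Group.IsSolvable G := by
  intro n
  induction n with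
  | zero =>
    intro G _ _ hc _
    have := Nat.card_pos (α := G)
    omega
  | succ n ih =>
    intro G _ _ hc h
    rcases subsingleton_or_nontrivial G with hs | hnt
    · infer_instance
    set S : Set (Subgroup G) := {K | K.Normal ∧ K ≠ ⊥} with hS
    have hStop : (⊤ : Subgroup G) ∈ S := by
      refine ⟨inferInstance, fun e => ?_⟩
      obtain ⟨x, hx⟩ := exists_ne (1 : G)
      have hxb : x ∈ (⊥ : Subgroup G) := e ▸ Subgroup.mem_top x
      exact hx (Subgroup.mem_bot.mp hxb)
    obtain ⟨N, hNS, hminN⟩ := (wellFounded_lt (α := Subgroup G)).has_min S ⟨⊤, hStop⟩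
    obtain ⟨hNnorm, hNbot⟩ := hNS
    haveI := hNnorm
    by_cases hNtop : N = ⊤
    · refine simple_case h fun K hK => ?_
      by_cases hKbot : K = ⊥
      · exact Or.inl hKbot
      · right
        have hnotlt := hminN K ⟨hK, hKbot⟩
        rw [hNtop] at hnotlt
        by_contra hne
        exact hnotlt (lt_top_iff_ne_top.mpr hne)
    · -- N is a proper minimal normal subgroup
      have hminN' : ∀ K : Subgroup G, K.Normal → K ≠ ⊥ → K ≤ N → K = N := by
        intro K h1 h2 h3
        exact ((eq_or_lt_of_le h3).resolve_right (hminN K ⟨h1, h2⟩))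
      have hcardN : 1 < Nat.card ↥N :=
        Finite.one_lt_card_iff_nontrivial.mpr ((Subgroup.nontrivial_iff_ne_bot N).mpr hNbot)
      have hcardeq : Nat.card G = Nat.card (G ⧸ N) * Nat.card ↥N :=
        Subgroup.card_eq_card_quotient_mul_card_subgroup N
      have hqle : Nat.card (G ⧸ N) ≤ n := by
        have hq1 : 0 < Nat.card (G ⧸ N) := Nat.card_pos
        have h2 : Nat.card (G ⧸ N) * 2 ≤ Nat.card G := by
          rw [hcardeq]
          exact Nat.mul_le_mul_left _ hcardN
        omega
      haveI hQsolv : Group.IsSolvable (G ⧸ N) := ih (G ⧸ N) hqle (hyp_quotient h N)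
      have hNsolv : Group.IsSolvable ↥N := by
        by_cases hcN : ⁅N, (⊤ : Subgroup G)⁆ = N
        · -- N is perfect-ish: N = [N, G]
          have claim3 : ∀ H : Subgroup G, IsThreeMaximal H → H ≤ N → H = ⊥ := by
            intro H h3 hHN
            have hcomm_le : ⁅H, (⊤ : Subgroup G)⁆ ≤ N := by
              refine Subgroup.commutator_le.mpr fun g₁ hg₁ g₂ _ => ?_
              have h1 : g₁ ∈ N := hHN hg₁
              have h2 : g₂ * g₁⁻¹ * g₂⁻¹ ∈ N := hNnorm.conj_mem _ (N.inv_mem h1) g₂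
              have he : ⁅g₁, g₂⁆ = g₁ * (g₂ * g₁⁻¹ * g₂⁻¹) := by
                simp only [commutatorElement_def]
                group
              rw [he]
              exact N.mul_mem h1 h2
            by_cases hcbot : ⁅H, (⊤ : Subgroup G)⁆ = ⊥
            · by_contra hHbot
              have hHc : H ≤ Subgroup.center G := by
                intro x hx
                rw [Subgroup.mem_center_iff]
                intro g
                have hmem : ⁅x, g⁆ ∈ (⊥ : Subgroup G) :=
                  hcbot ▸ Subgroup.commutator_mem_commutator hx (Subgroup.mem_top g)
                exact (commutatorElement_eq_one_iff_mul_comm.mp (Subgroup.mem_bot.mp hmem)).symm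
              have hcenter_norm : (Subgroup.center G).Normal := inferInstance
              have hKnorm : (Subgroup.center G ⊓ N).Normal := by
                constructor
                intro x hx g
                rcases Subgroup.mem_inf.mp hx with ⟨hx1, hx2⟩
                exact Subgroup.mem_inf.mpr
                  ⟨hcenter_norm.conj_mem x hx1 g, hNnorm.conj_mem x hx2 g⟩
              have hKbot : Subgroup.center G ⊓ N ≠ ⊥ := by
                intro e
                exact hHbot (le_bot_iff.mp (e ▸ le_inf hHc hHN))
              have hKN := hminN' _ hKnorm hKbot inf_le_right
              have hNcent : N ≤ Subgroup.center G := by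
                rw [← hKN]
                exact inf_le_left
              have hcbot2 : ⁅N, (⊤ : Subgroup G)⁆ = ⊥ := by
                rw [eq_bot_iff]
                refine Subgroup.commutator_le.mpr fun g₁ hg₁ g₂ _ => ?_
                have hcc := Subgroup.mem_center_iff.mp (hNcent hg₁) g₂
                rw [Subgroup.mem_bot, commutatorElement_eq_one_iff_mul_comm]
                exact hcc.symm
              rw [hcN] at hcbot2
              exact hNbot hcbot2
            · have heq : ⁅H, (⊤ : Subgroup G)⁆ = N :=
                hminN' _ (commutator_top_normal H) hcbot hcomm_le
              exact eq_bot_of_icphi (h H h3) (by rw [heq]; exact hHN)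
          have htopmap : (⊤ : Subgroup ↥N).map N.subtype = N := by
            rw [← MonoidHom.range_eq_map, Subgroup.range_subtype]
          obtain ⟨M₂, hM₂co, hNM₂⟩ := (eq_top_or_exists_le_coatom N).resolve_left hNtop
          rcases eq_or_lt_of_le hNM₂ with hEq2 | hlt2
          · -- N itself is maximal
            have hNco : IsCoatom N := by rw [hEq2]; exact hM₂co
            have hsmallN : ∀ A B : Subgroup G, A < B → B < N → A = ⊥ := by
              intro A B hAB hBN
              by_contra hA
              obtain ⟨H, h3, hAH, hHN, hHbot⟩ := exists_threeMax hNco hA hAB hBN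
              exact hHbot (claim3 H h3 hHN)
            refine small_solvable ↥N ?_
            intro A' B' h1 h2
            have hmapltAB : A'.map N.subtype < B'.map N.subtype :=
              lt_of_le_of_ne (Subgroup.map_mono h1.le)
                (fun e => h1.ne (Subgroup.map_injective N.subtype_injective e))
            have hmapltB : B'.map N.subtype < N := by
              refine lt_of_le_of_ne (Subgroup.map_subtype_le B') fun e => ?_
              exact h2.ne (Subgroup.map_injective N.subtype_injective (by rw [e, htopmap]))
            have hAbot := hsmallN _ _ hmapltAB hmapltB
            refine Subgroup.map_injective N.subtype_injective ?_
            rw [hAbot, Subgroup.map_bot]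
          · obtain ⟨M₁, hNM₁, hM₁M₂, hco1⟩ := exists_max_between hlt2
            rcases eq_or_lt_of_le hNM₁ with hEq1 | hlt1
            · -- N = M₁ is second maximal
              have hallbot : ∀ L : Subgroup G, L < N → L = ⊥ := by
                intro L hL
                obtain ⟨H, hLH, hHN, hco0⟩ := exists_max_between hL
                have h3 : IsThreeMaximal H :=
                  ⟨M₁, M₂, hM₂co, hM₁M₂, hco1, by rw [← hEq1]; exact hHN,
                    by rw [← hEq1]; exact hco0⟩
                have hHbot := claim3 H h3 hHN
                rw [hHbot] at hLH
                exact le_bot_iff.mp hLH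
              refine small_solvable ↥N ?_
              intro A' B' h1 h2
              have hmapltB : B'.map N.subtype < N := by
                refine lt_of_le_of_ne (Subgroup.map_subtype_le B') fun e => ?_
                exact h2.ne (Subgroup.map_injective N.subtype_injective (by rw [e, htopmap]))
              have hBbot := hallbot _ hmapltB
              have hB'bot : B' = ⊥ := Subgroup.map_injective N.subtype_injective
                (by rw [hBbot, Subgroup.map_bot])
              rw [hB'bot] at h1
              exact absurd h1 (not_lt_bot)
            · -- N < M₁, find H maximal in M₁ containing N
              obtain ⟨H, hNH, hHM₁, hco0⟩ := exists_max_between hlt1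
              have h3 : IsThreeMaximal H := ⟨M₁, M₂, hM₂co, hM₁M₂, hco1, hHM₁, hco0⟩
              have hic := h H h3
              have hNle : N ≤ H ⊓ ⁅H, (⊤ : Subgroup G)⁆ := by
                refine le_inf hNH ?_
                calc N = ⁅N, (⊤ : Subgroup G)⁆ := hcN.symm
                  _ ≤ ⁅H, (⊤ : Subgroup G)⁆ := Subgroup.commutator_mono hNH le_rfl
              exact solvable_of_le_frattini (hNle.trans hic)
        · -- [N, G] < N, hence trivial, so N is central and abelian
          have hle : ⁅N, (⊤ : Subgroup G)⁆ ≤ N := Subgroup.commutator_le_left N ⊤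
          have hnorm : (⁅N, (⊤ : Subgroup G)⁆).Normal := commutator_top_normal N
          have hbot : ⁅N, (⊤ : Subgroup G)⁆ = ⊥ := by
            by_contra hne
            exact hcN (hminN' _ hnorm hne hle)
          refine isSolvable_of_comm fun a b => ?_
          have hmem : ⁅(a : G), (b : G)⁆ ∈ (⊥ : Subgroup G) :=
            hbot ▸ Subgroup.commutator_mem_commutator a.2 (Subgroup.mem_top (b : G))
          exact Subtype.ext (commutatorElement_eq_one_iff_mul_comm.mp (Subgroup.mem_bot.mp hmem))
      exact solvable_of_ker_le_range N.subtype (QuotientGroup.mk' N)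
        (by rw [QuotientGroup.ker_mk', Subgroup.range_subtype])

end ICPhiAux

theorem stmt15 {G : Type*} [Group G] [Finite G]
    (h : ∀ H : Subgroup G, IsThreeMaximal H → IsICPhi H) : IsSolvable G :=
  ICPhiAux.main_aux (Nat.card G) G le_rfl h
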